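/- arXiv:1703.10437 — 2 statements merged into one kernel-verified Lean document; each statement's English description precedes it below -/
import Mathlib

section
/- Let w be a twisted involution and i ∈ B with ℓ(w · s i) < ℓ(w) and (s i)* · w · (s i) ≠ w. Then (s i)* · w · (s i) is a twisted involution and ℓ((s i)* · w · (s i)) = ℓ(w) − 2. -/
/-!
Common setup: twisted Coxeter systems, involution words, braid/half-braid moves.
-/

noncomputable section
open scoped Classical

namespace TwistedCoxeter

variable {B : Type*} {W : Type*} [Group W] {M : CoxeterMatrix B}

/-- A twisting of a Coxeter system: a group automorphism `auto` of `W` with `auto ∘ auto = id`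
together with an involution `star` of the index set, compatible on simple reflections. -/
structure Twisting (cs : CoxeterSystem M W) where
  auto : W →* W
  star : B → B
  auto_auto : ∀ w, auto (auto w) = w
  star_star : ∀ i, star (star i) = i
  auto_simple : ∀ i, auto (cs.simple i) = cs.simple (star i)

/-- The trivial twisting. -/
def trivialTwisting (cs : CoxeterSystem M W) : Twisting cs where
  auto := MonoidHom.id W
  star := id
  auto_auto _ := rfl
  star_star _ := rfl
  auto_simple _ := rfl

variable {cs : CoxeterSystem M W}

/-- `w` is a twisted involution: `w* = w⁻¹`. -/
def IsTwistedInvolution (t : Twisting cs) (w : W) : Prop := t.auto w = w⁻¹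

/-- One step of the recursion defining `iota`. -/
def invStep (t : Twisting cs) (z : W) (i : B) : W :=
  if cs.length (z * cs.simple i) < cs.length z then z
  else if t.auto (cs.simple i) * z * cs.simple i = z then z * cs.simple i
  else t.auto (cs.simple i) * z * cs.simple i

/-- The twisted involution obtained from a word, via the "demazure-like" recursion
`ι([]) = 1`, `ι(a ++ [i]) = invStep (ι a) i`. -/
def iota (t : Twisting cs) (a : List B) : W := a.foldl (invStep t) 1

/-- `a` is an involution word for `w`: `ι(a) = w` and `a` has minimal length among
all words with this property. -/
def IsInvolutionWord (t : Twisting cs) (w : W) (a : List B) : Prop :=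
  iota t a = w ∧ ∀ b : List B, iota t b = w → a.length ≤ b.length

/-- The set `R̂(w)` of involution words for `w`. -/
def invWords (t : Twisting cs) (w : W) : Set (List B) := {a | IsInvolutionWord t w a}

/-- `ℓ̂(w)`: the minimal length of a word `a` with `ι(a) = w`. -/
def hatLength (t : Twisting cs) (w : W) : ℕ :=
  sInf {n | ∃ a : List B, iota t a = w ∧ a.length = n}

/-- The alternating word `[i, j, i, j, ...]` of length `m` (starting with `i`). -/
def altWord (i j : B) : ℕ → List B
  | 0 => []
  | n + 1 => i :: altWord j i n

/-- Words `a` and `b` differ by a braid move. -/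
def BraidMove (M : CoxeterMatrix B) (a b : List B) : Prop :=
  ∃ (u v : List B) (i j : B), i ≠ j ∧ M i j ≠ 0 ∧
    a = u ++ altWord i j (M i j) ++ v ∧ b = u ++ altWord j i (M i j) ++ v

/-- The quantity `m_*(i,j)`. -/
def mstar (t : Twisting cs) (i j : B) : ℕ :=
  if M i j ≠ 0 ∧ M i j % 2 = 1 ∧ ({t.star i, t.star j} : Set B) = {i, j} then
    (M i j + 1) / 2
  else if M i j ≠ 0 ∧ M i j % 2 = 0 ∧ t.star i = i ∧ t.star j = j then
    M i j / 2 + 1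
  else if M i j ≠ 0 ∧ M i j % 2 = 0 ∧ t.star i = j then
    M i j / 2
  else M i j

/-- Words `a` and `b` differ by a half-braid move. -/
def HalfBraidMove (t : Twisting cs) (a b : List B) : Prop :=
  ∃ (v : List B) (i j : B), i ≠ j ∧ M i j ≠ 0 ∧ mstar t i j < M i j ∧
    a = altWord i j (mstar t i j) ++ v ∧ b = altWord j i (mstar t i j) ++ v

/-- Words `a` and `b` differ by a generalized half-braid move. -/
def GenHalfBraidMove (t : Twisting cs) (a b : List B) : Prop :=
  ∃ (r v : List B) (i j : B) (m : ℕ), i ≠ j ∧ 1 ≤ m ∧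
    a = r ++ altWord i j m ++ v ∧ b = r ++ altWord j i m ++ v ∧
    ∃ z : W, IsTwistedInvolution t z ∧
      IsInvolutionWord t z (r ++ altWord i j m) ∧ IsInvolutionWord t z (r ++ altWord j i m)

/-- `S` is an equivalence class of the equivalence relation on words generated by the
(symmetric) move relation `E`: any two elements of `S` are connected by a finite chain of
moves, and `S` is closed under moves. -/
def IsMoveClass (E : List B → List B → Prop) (S : Set (List B)) : Prop :=
  (∀ a ∈ S, ∀ b ∈ S, Relation.ReflTransGen E a b) ∧
  (∀ a ∈ S, ∀ b, E a b → b ∈ S)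

/-- The twisted Coxeter system is perfectly braided if each `R̂(w)`, for `w` a twisted
involution, is an equivalence class of the relation generated by braid moves and
half-braid moves. -/
def PerfectlyBraided (t : Twisting cs) : Prop :=
  ∀ w : W, IsTwistedInvolution t w →
    IsMoveClass (fun a b => BraidMove M a b ∨ HalfBraidMove t a b) (invWords t w)

end TwistedCoxeter


open CoxeterSystem List


namespace StrongExchangeAux

variable {B W : Type*} [Group W] {M : CoxeterMatrix B} (cs : CoxeterSystem M W)

local prefix:100 "s" => cs.simple
local prefix:100 "π" => cs.wordProd
local prefix:100 "ℓ" => cs.length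

/-- The Björner–Brenti map on `W × ℤˣ`. -/
def F (i : B) : Function.End (W × ℤˣ) :=
  fun p => (s i * p.1 * s i, if p.1 = s i then -p.2 else p.2)

/-- Number of occurrences of `t` in the right inversion sequence of `ω`. -/
def cnt (t : W) (ω : List B) : ℕ :=
  (cs.rightInvSeq ω).countP (fun x => decide (x = t))

theorem prodF_apply (ω : List B) (t : W) (ε : ℤˣ) :
    (ω.map (F cs)).prod (t, ε) =
      (π ω * t * (π ω)⁻¹, ε * (-1 : ℤˣ) ^ (cnt cs t ω)) := by
  induction ω with
  | nil =>
    show (t, ε) = _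
    simp [cnt]
  | cons x ω ih =>
    have h0 : ((x :: ω).map (F cs)).prod (t, ε)
        = F cs x ((ω.map (F cs)).prod (t, ε)) := rfl
    rw [h0, ih]
    simp only [F, cnt, rightInvSeq, wordProd_cons]
    have hcond : (π ω * t * (π ω)⁻¹ = s x) ↔ ((π ω)⁻¹ * s x * π ω = t) := by
      constructor
      · intro h; rw [← h]; group
      · intro h; rw [← h]; group
    rw [List.countP_cons]
    by_cases h : (π ω)⁻¹ * s x * π ω = t
    · rw [if_pos (hcond.mpr h), if_pos (by simpa using h)]
      ext
      · simp only [mul_inv_rev, inv_simple]; group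
      · simp only [pow_succ]; push_cast; ring
    · rw [if_neg (fun hc => h (hcond.mp hc)), if_neg (by simpa using h)]
      ext
      · simp only [mul_inv_rev, inv_simple]; group
      · simp

theorem prod_map_alternatingWord {G : Type*} [Monoid G] (f : B → G) (i j : B) (m : ℕ) :
    ((alternatingWord i j (2 * m)).map f).prod = (f i * f j) ^ m := by
  induction m with
  | zero => simp [alternatingWord]
  | succ m ih =>
    have h1 : 2 * (m + 1) = (2 * m + 1) + 1 := by ring
    rw [h1, alternatingWord_succ', alternatingWord_succ']
    have he : ¬ Even (2 * m + 1) := by simp [parity_simps]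
    have he2 : Even (2 * m) := even_two_mul m
    rw [if_neg he, if_pos he2]
    simp only [List.map_cons, List.prod_cons]
    rw [ih, pow_succ', mul_assoc]

theorem ris_alternatingWord (i j : B) (n : ℕ) :
    cs.rightInvSeq (alternatingWord i j n)
      = (List.range n).map (fun k => (s j * s i) ^ (n - 1 - k) * s j) := by
  induction n generalizing i j with
  | zero => simp [alternatingWord]
  | succ n ih =>
    rw [alternatingWord_succ, rightInvSeq_concat, ih]
    rw [List.range_succ, List.map_append, List.map_map, List.concat_eq_append]
    congr 1
    · apply List.map_congr_left
      intro k hk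
      have hk' : k < n := List.mem_range.mp hk
      have hsub : n + 1 - 1 - k = (n - 1 - k) + 1 := by omega
      simp only [Function.comp_apply, MulAut.conj_apply, inv_simple, hsub]
      have hsemi : SemiconjBy (s j) (s i * s j) (s j * s i) := by
        unfold SemiconjBy; group
      calc s j * ((s i * s j) ^ (n - 1 - k) * s i) * s j
          = (s j * (s i * s j) ^ (n - 1 - k)) * (s i * s j) := by group
        _ = ((s j * s i) ^ (n - 1 - k) * s j) * (s i * s j) := by
              rw [(hsemi.pow_right (n - 1 - k)).eq]
        _ = (s j * s i) ^ (n - 1 - k + 1) * s j := by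
              rw [pow_succ]; group
    · simp


theorem cnt_alternatingWord_even (i j : B) (t : W) :
    Even (cnt cs t (alternatingWord i j (2 * M i j))) := by
  set m := M i j with hm
  unfold cnt
  rw [ris_alternatingWord]
  have h2m : 2 * m = m + m := by ring
  rw [h2m, List.range_add, List.map_append, List.map_map, List.countP_append]
  have : List.map ((fun k => (s j * s i) ^ (m + m - 1 - k) * s j) ∘ fun x => m + x)
        (List.range m)
      = List.map (fun k => (s j * s i) ^ (m + m - 1 - k) * s j) (List.range m) := by
    apply List.map_congr_left
    intro k hk
    have hk' : k < m := List.mem_range.mp hk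
    simp only [Function.comp_apply]
    have hexp : m + m - 1 - k = m + (m + m - 1 - (m + k)) := by omega
    rw [hexp, pow_add, cs.simple_mul_simple_pow' i j, one_mul]
  rw [this]
  exact Even.add_self _

theorem liftable : CoxeterMatrix.IsLiftable M (F cs) := by
  intro i j
  have h1 : (F cs i * F cs j) ^ M i j
      = ((alternatingWord i j (2 * M i j)).map (F cs)).prod :=
    (prod_map_alternatingWord (F cs) i j (M i j)).symm
  have h2 : π (alternatingWord i j (2 * M i j)) = 1 := by
    have := prod_map_alternatingWord cs.simple i j (M i j)
    rw [cs.simple_mul_simple_pow i j] at this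
    exact this
  funext p
  obtain ⟨t, ε⟩ := p
  rw [h1]
  rw [prodF_apply, h2]
  obtain ⟨c, hc⟩ := cnt_alternatingWord_even cs i j t
  rw [hc]
  show _ = (t, ε)
  simp [pow_add, mul_assoc]

/-- The Björner–Brenti representation. -/
def Phi : W →* Function.End (W × ℤˣ) := CoxeterSystem.lift cs ⟨F cs, liftable cs⟩

theorem Phi_simple (i : B) : Phi cs (s i) = F cs i :=
  cs.lift_apply_simple (liftable cs) i

theorem Phi_wordProd (ω : List B) : Phi cs (π ω) = (ω.map (F cs)).prod := by
  unfold wordProd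
  rw [map_list_prod, List.map_map]
  congr 1
  apply List.map_congr_left
  intro x _
  exact Phi_simple cs x

/-- The sign `η(w, t)`. -/
def eta (w t : W) : ℤˣ := (Phi cs w (t, 1)).2

theorem eta_wordProd (ω : List B) (t : W) :
    eta cs (π ω) t = (-1 : ℤˣ) ^ (cnt cs t ω) := by
  unfold eta
  rw [Phi_wordProd, prodF_apply]
  simp

theorem Phi_apply (w t : W) (ε : ℤˣ) :
    Phi cs w (t, ε) = (w * t * w⁻¹, ε * eta cs w t) := by
  obtain ⟨ω, rfl⟩ := cs.wordProd_surjective w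
  rw [Phi_wordProd, prodF_apply, eta_wordProd]

theorem eta_one (t : W) : eta cs 1 t = 1 := by
  unfold eta
  rw [map_one]
  rfl

theorem eta_mul (u v t : W) : eta cs (u * v) t = eta cs v t * eta cs u (v * t * v⁻¹) := by
  have h : Phi cs (u * v) (t, 1) = Phi cs u (Phi cs v (t, 1)) := by
    rw [map_mul]; rfl
  unfold eta
  rw [h, Phi_apply, Phi_apply, Phi_apply]
  simp

theorem eta_simple_self (i : B) : eta cs (s i) (s i) = -1 := by
  unfold eta
  rw [Phi_simple]
  show (if (s i) = (s i) then -(1 : ℤˣ) else 1) = -1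
  simp

theorem eta_inv_conj (u x : W) : eta cs u⁻¹ (u * x * u⁻¹) * eta cs u x = 1 := by
  have h := eta_mul cs u⁻¹ u (x)
  rw [inv_mul_cancel, eta_one] at h
  have h2 : u * x * u⁻¹ = u * x * u⁻¹ := rfl
  rw [eq_comm] at h
  calc eta cs u⁻¹ (u * x * u⁻¹) * eta cs u x = eta cs u x * eta cs u⁻¹ (u * x * u⁻¹) := mul_comm _ _
    _ = 1 := h

theorem eta_refl {t : W} (ht : cs.IsReflection t) : eta cs t t = -1 := by
  obtain ⟨u, i, rfl⟩ := ht
  have h1 : eta cs ((u * s i) * u⁻¹) (u * s i * u⁻¹)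
      = eta cs u⁻¹ (u * s i * u⁻¹) * eta cs (u * s i) (u⁻¹ * (u * s i * u⁻¹) * u⁻¹⁻¹) :=
    eta_mul cs (u * s i) u⁻¹ (u * s i * u⁻¹)
  have h2 : u⁻¹ * (u * s i * u⁻¹) * u⁻¹⁻¹ = s i := by group
  rw [h2] at h1
  have h3 : eta cs (u * s i) (s i) = eta cs (s i) (s i) * eta cs u (s i * s i * (s i)⁻¹) :=
    eta_mul cs u (s i) (s i)
  have h4 : s i * s i * (s i)⁻¹ = s i := by group
  rw [h4, eta_simple_self] at h3
  rw [h3] at h1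
  have h5 := eta_inv_conj cs u (s i)
  calc eta cs (u * s i * u⁻¹) (u * s i * u⁻¹) = _ := h1
    _ = -(eta cs u⁻¹ (u * s i * u⁻¹) * eta cs u (s i)) := by
          rw [neg_one_mul, mul_neg]
    _ = -1 := by rw [h5]

theorem mem_ris_of_eta {w t : W} {ω : List B} (hω : π ω = w) (heta : eta cs w t = -1) :
    t ∈ cs.rightInvSeq ω := by
  by_contra hmem
  have hc : cnt cs t ω = 0 := by
    unfold cnt
    rw [List.countP_eq_zero]
    intro a ha
    simp only [decide_eq_true_eq]
    intro h; exact hmem (h ▸ ha)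
  rw [← hω, eta_wordProd, hc, pow_zero] at heta
  exact absurd heta (by decide)

theorem strong_exchange_right {w t : W} (ht : cs.IsReflection t)
    (hl : ℓ (w * t) < ℓ w) {ω : List B} (hω : π ω = w) :
    t ∈ cs.rightInvSeq ω := by
  apply mem_ris_of_eta cs hω
  have h1 : eta cs ((w * t) * t) t = eta cs t t * eta cs (w * t) (t * t * t⁻¹) :=
    eta_mul cs (w * t) t t
  have h2 : t * t * t⁻¹ = t := by group
  have h3 : (w * t) * t = w := by rw [mul_assoc, ht.mul_self, mul_one]
  rw [h2, h3, eta_refl cs ht] at h1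
  have h4 : eta cs (w * t) t = 1 := by
    rcases Int.units_eq_one_or (eta cs (w * t) t) with h | h
    · exact h
    · exfalso
      obtain ⟨ω', hred', hω'⟩ := cs.exists_reduced_word' (w * t)
      have hmem := mem_ris_of_eta cs hω'.symm h
      have hinv := cs.isRightInversion_of_mem_rightInvSeq hred' hmem
      rw [← hω'] at hinv
      have := hinv.2
      rw [mul_assoc, ht.mul_self, mul_one] at this
      omega
  rw [h4, mul_one] at h1
  exact h1

theorem strong_exchange_left {w t : W} (ht : cs.IsReflection t)
    (hl : ℓ (t * w) < ℓ w) {ω : List B} (hω : π ω = w) :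
    t ∈ cs.leftInvSeq ω := by
  have h1 : π ω.reverse = w⁻¹ := by rw [cs.wordProd_reverse, hω]
  have h2 : ℓ (w⁻¹ * t) < ℓ w⁻¹ := by
    rw [cs.length_inv]
    calc ℓ (w⁻¹ * t) = ℓ ((w⁻¹ * t)⁻¹) := (cs.length_inv _).symm
      _ = ℓ (t⁻¹ * w) := by rw [mul_inv_rev, inv_inv]
      _ = ℓ (t * w) := by rw [ht.inv]
      _ < ℓ w := hl
  have h3 := strong_exchange_right cs ht h2 h1
  rw [cs.rightInvSeq_reverse] at h3
  exact List.mem_reverse.mp h3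


theorem lifting {w : W} {i j : B} (hj : ℓ (w * s j) < ℓ w) (hi : ℓ (s i * w) < ℓ w)
    (hne : s i * w * s j ≠ w) : ℓ (s i * w * s j) + 2 = ℓ w := by
  have hj' : ℓ (w * s j) + 1 = ℓ w := by
    rcases cs.length_mul_simple w j with h | h <;> omega
  obtain ⟨ω', hred', hω'⟩ := cs.exists_reduced_word' (w * s j)
  set ω : List B := ω'.concat j with hωdef
  have hπ : π ω = w := by
    rw [hωdef, cs.wordProd_concat, ← hω', cs.simple_mul_simple_cancel_right]
  have hlen' : ω'.length = ℓ (w * s j) := by rw [← hred', ← hω']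
  have hlenω : ω.length = ℓ w := by
    rw [hωdef, List.length_concat]; omega
  have hmem := strong_exchange_left cs (cs.isReflection_simple i) hi hπ
  obtain ⟨k, hk, hget⟩ := List.mem_iff_getElem.mp hmem
  rw [cs.length_leftInvSeq] at hk
  have hgetD : (cs.leftInvSeq ω).getD k 1 = s i := by
    rw [List.getD_eq_getElem _ 1 (by rw [cs.length_leftInvSeq]; exact hk)]
    exact hget
  have hse : s i * w = π (ω.eraseIdx k) := by
    rw [← hπ, ← hgetD]
    exact cs.getD_leftInvSeq_mul_wordProd ω k
  have hklt : k < ω'.length + 1 := by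
    rw [hωdef, List.length_concat] at hk; omega
  rcases Nat.lt_or_ge k ω'.length with hkl | hkg
  · -- k < ω'.length : erased inside ω'
    have herase : ω.eraseIdx k = (ω'.eraseIdx k) ++ [j] := by
      rw [hωdef, List.concat_eq_append, List.eraseIdx_eq_take_drop_succ,
        List.eraseIdx_eq_take_drop_succ]
      rw [List.take_append_of_le_length (by omega), List.drop_append_of_le_length (by omega),
        List.append_assoc]
    have hsej : s i * w * s j = π (ω'.eraseIdx k) := by
      rw [hse, herase, cs.wordProd_append, cs.wordProd_singleton, mul_assoc,
        cs.simple_mul_simple_self, mul_one]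
    have hub : ℓ (s i * w * s j) ≤ ω'.length - 1 := by
      rw [hsej]
      calc ℓ (π (ω'.eraseIdx k)) ≤ (ω'.eraseIdx k).length := cs.length_wordProd_le _
        _ ≤ ω'.length - 1 := by rw [← List.length_eraseIdx_add_one hkl]; omega
    have hlb := cs.length_simple_mul (w * s j) i
    rw [← mul_assoc] at hlb
    rcases hlb with h | h <;> omega
  · -- k = ω'.length : erased the last letter j
    have hkeq : k = ω'.length := by omega
    have herase : ω.eraseIdx k = ω' := by
      rw [hωdef, hkeq, List.concat_eq_append, List.eraseIdx_eq_take_drop_succ,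
        List.take_left, List.drop_eq_nil_of_le (by simp), List.append_nil]
    exfalso
    apply hne
    rw [hse, herase, ← hω', mul_assoc, cs.simple_mul_simple_self, mul_one]

end StrongExchangeAux

namespace TwistedCoxeter

variable {B W : Type*} [Group W] {M : CoxeterMatrix B} {cs : CoxeterSystem M W}

theorem Twisting.length_auto (t : Twisting cs) (x : W) :
    cs.length (t.auto x) = cs.length x := by
  have key : ∀ y : W, cs.length (t.auto y) ≤ cs.length y := by
    intro y
    obtain ⟨ω, hred, hω⟩ := cs.exists_reduced_word' y
    have h1 : t.auto y = cs.wordProd (ω.map t.star) := by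
      rw [hω]
      unfold CoxeterSystem.wordProd
      rw [map_list_prod, List.map_map, List.map_map]
      congr 1
      apply List.map_congr_left
      intro a _
      exact t.auto_simple a
    rw [h1]
    calc cs.length (cs.wordProd (ω.map t.star)) ≤ (ω.map t.star).length :=
          cs.length_wordProd_le _
      _ = ω.length := List.length_map _
      _ = cs.length y := by rw [hω]; exact hred.symm
  refine le_antisymm (key x) ?_
  have := key (t.auto x)
  rwa [t.auto_auto] at this

end TwistedCoxeter

namespace TwistedCoxeter

/-- If `w` is a twisted involution, `ℓ(w * s i) < ℓ(w)` and
`(s i)* * w * (s i) ≠ w`, then `(s i)* * w * (s i)` is a twisted involution of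
length `ℓ(w) - 2`. -/
theorem statement_1 {B W : Type*} [Group W] {M : CoxeterMatrix B} {cs : CoxeterSystem M W}
    (t : Twisting cs) (w : W) (hw : IsTwistedInvolution t w) (i : B)
    (hdes : cs.length (w * cs.simple i) < cs.length w)
    (hne : t.auto (cs.simple i) * w * cs.simple i ≠ w) :
    IsTwistedInvolution t (t.auto (cs.simple i) * w * cs.simple i) ∧
      cs.length (t.auto (cs.simple i) * w * cs.simple i) + 2 = cs.length w := by
  have hstar : t.auto (cs.simple i) = cs.simple (t.star i) := t.auto_simple i
  have hw' : t.auto w = w⁻¹ := hw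
  constructor
  · show t.auto (t.auto (cs.simple i) * w * cs.simple i)
      = (t.auto (cs.simple i) * w * cs.simple i)⁻¹
    rw [map_mul, map_mul, t.auto_auto, hw']
    rw [hstar, mul_inv_rev, mul_inv_rev, cs.inv_simple, cs.inv_simple, mul_assoc]
  · have hi' : cs.length (cs.simple (t.star i) * w) < cs.length w := by
      have h1 := t.length_auto (cs.simple (t.star i) * w)
      rw [map_mul, hw', t.auto_simple, t.star_star] at h1
      have h2 : cs.length (cs.simple i * w⁻¹) = cs.length (w * cs.simple i) := by
        rw [← cs.length_inv (cs.simple i * w⁻¹), mul_inv_rev, inv_inv, cs.inv_simple]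
      omega
    rw [hstar]
    rw [hstar] at hne
    exact StrongExchangeAux.lifting cs hdes hi' hne

end TwistedCoxeter
end
end

section
/- Every twisted involution w has at least one involution word (R̂(w) ≠ ∅). Moreover, if w ∈ I_* and i ∈ B satisfy ℓ(w · s i) < ℓ(w), and v is defined to be w · (s i) if (s i)* · w · (s i) = w and to be (s i)* · w · (s i) otherwise, then v ∈ I_*, ℓ̂(w) = ℓ̂(v) + 1, and for every involution word a for v, the word a ++ [i] is an involution word for w. -/
/-!
Common setup: twisted Coxeter systems, involution words, braid/half-braid moves.
-/

noncomputable section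
open scoped Classical

namespace TwistedCoxeterAux
open CoxeterSystem List

variable {B : Type*} {W : Type*} [Group W] {M : CoxeterMatrix B}

private lemma sand (cs : CoxeterSystem M W) (i : B) (t : W) :
    cs.simple i * (cs.simple i * t * cs.simple i) * cs.simple i = t := by
  simp [mul_assoc, cs.simple_mul_simple_self, cs.simple_mul_simple_cancel_left]

private lemma sgnif (P : Prop) [Decidable P] (e : ℤˣ) :
    (if P then -e else e) = e * (if P then -1 else 1) := by split <;> simp

private lemma qinv (a b : W) (ha : a * a = 1) (hb : b * b = 1) : (a * b)⁻¹ = b * a := by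
  refine inv_eq_of_mul_eq_one_right ?_
  calc a * b * (b * a) = a * (b * b) * a := by simp only [mul_assoc]
  _ = 1 := by rw [hb, mul_one, ha]

private lemma qkey (a b : W) (ha : a * a = 1) (hb : b * b = 1) (k : ℕ) :
    (a * b)⁻¹ * (b * (a * b) ^ k) * (a * b) = b * (a * b) ^ (k + 2) := by
  rw [qinv a b ha hb, show k + 2 = 1 + k + 1 from by ring, pow_add, pow_add, pow_one]
  simp only [mul_assoc]

/-- the sign-action function of a simple reflection on `W × ℤˣ`. -/
def etaFun (cs : CoxeterSystem M W) (i : B) : W × ℤˣ → W × ℤˣ :=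
  fun p => (cs.simple i * p.1 * cs.simple i, if p.1 = cs.simple i then -p.2 else p.2)

lemma etaFun_invol (cs : CoxeterSystem M W) (i : B) : Function.Involutive (etaFun cs i) := by
  rintro ⟨t, e⟩
  simp only [etaFun]
  have hiff : cs.simple i * t * cs.simple i = cs.simple i ↔ t = cs.simple i := by
    constructor
    · intro h
      have h2 := sand cs i t
      rw [h, cs.simple_mul_simple_self, one_mul] at h2
      exact h2.symm
    · rintro rfl
      rw [cs.simple_mul_simple_self, one_mul]
  refine Prod.ext (sand cs i t) ?_
  show (if cs.simple i * t * cs.simple i = cs.simple i then _ else _) = e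
  rw [if_congr hiff rfl rfl]
  by_cases h : t = cs.simple i <;> simp [h]

def eta (cs : CoxeterSystem M W) (i : B) : Equiv.Perm (W × ℤˣ) :=
  (etaFun_invol cs i).toPerm

lemma eta_apply (cs : CoxeterSystem M W) (i : B) (t : W) (e : ℤˣ) :
    eta cs i (t, e) = (cs.simple i * t * cs.simple i, if t = cs.simple i then -e else e) := rfl

lemma eta_mul_eta_pow (cs : CoxeterSystem M W) (i j : B) (n : ℕ) (t : W) (e : ℤˣ) :
    ((eta cs i * eta cs j) ^ n) (t, e) =
      ((cs.simple i * cs.simple j) ^ n * t * ((cs.simple i * cs.simple j) ^ n)⁻¹,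
        e * ∏ k ∈ Finset.range (2 * n),
          (if t = cs.simple j * (cs.simple i * cs.simple j) ^ k then (-1 : ℤˣ) else 1)) := by
  induction n generalizing t e with
  | zero => simp
  | succ n ih =>
    have ha := cs.simple_mul_simple_self i
    have hb := cs.simple_mul_simple_self j
    rw [pow_succ, Equiv.Perm.mul_apply]
    have hstep : (eta cs i * eta cs j) (t, e) =
        (cs.simple i * cs.simple j * t * (cs.simple i * cs.simple j)⁻¹,
         e * ((if t = cs.simple j * (cs.simple i * cs.simple j) ^ 0 then (-1:ℤˣ) else 1) *
          (if t = cs.simple j * (cs.simple i * cs.simple j) ^ 1 then (-1:ℤˣ) else 1))) := by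
      rw [Equiv.Perm.mul_apply, eta_apply, eta_apply]
      refine Prod.ext ?_ ?_
      · show cs.simple i * (cs.simple j * t * cs.simple j) * cs.simple i = _
        rw [qinv _ _ ha hb]
        simp only [mul_assoc]
      · show (if cs.simple j * t * cs.simple j = cs.simple i then _ else _) = _
        have hc2 : (cs.simple j * t * cs.simple j = cs.simple i) ↔
            (t = cs.simple j * (cs.simple i * cs.simple j) ^ 1) := by
          rw [pow_one]
          constructor
          · intro h
            have h2 := sand cs j t
            rw [h] at h2
            rw [← h2, mul_assoc]
          · intro h
            rw [h]
            calc cs.simple j * (cs.simple j * (cs.simple i * cs.simple j)) * cs.simple j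
                = (cs.simple j * cs.simple j) * cs.simple i *
                    (cs.simple j * cs.simple j) := by simp only [mul_assoc]
            _ = cs.simple i := by rw [hb]; simp
        have hc0 : (t = cs.simple j) ↔
            (t = cs.simple j * (cs.simple i * cs.simple j) ^ 0) := by
          rw [pow_zero, mul_one]
        rw [if_congr hc2 rfl rfl, if_congr hc0 rfl rfl, sgnif, sgnif]
        rw [mul_assoc]
    rw [hstep, ih]
    refine Prod.ext ?_ ?_
    · show (cs.simple i * cs.simple j) ^ n * (cs.simple i * cs.simple j * t *
          (cs.simple i * cs.simple j)⁻¹) * ((cs.simple i * cs.simple j) ^ n)⁻¹ = _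
      rw [pow_succ]
      group
    · show _ * ∏ k ∈ Finset.range (2 * n),
          (if cs.simple i * cs.simple j * t * (cs.simple i * cs.simple j)⁻¹ =
            cs.simple j * (cs.simple i * cs.simple j) ^ k then (-1:ℤˣ) else 1) = _
      have hcond : ∀ k : ℕ, (cs.simple i * cs.simple j * t * (cs.simple i * cs.simple j)⁻¹ =
          cs.simple j * (cs.simple i * cs.simple j) ^ k) ↔
          (t = cs.simple j * (cs.simple i * cs.simple j) ^ (k + 2)) := by
        intro k
        rw [← qkey _ _ ha hb k]
        constructor
        · intro h; rw [← h]; group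
        · intro h; rw [h]; group
      rw [Finset.prod_congr rfl (fun k _ => if_congr (hcond k) rfl rfl)]
      rw [show 2 * (n + 1) = 2 * n + 1 + 1 from by ring, Finset.prod_range_succ',
        Finset.prod_range_succ']
      simp only [show ∀ x : ℕ, x + 1 + 1 = x + 2 from fun _ => rfl]
      split_ifs <;> simp [mul_comm, mul_left_comm, mul_assoc]


lemma eta_liftable (cs : CoxeterSystem M W) : M.IsLiftable (fun i => eta cs i) := by
  intro i j
  by_cases h : M i j = 0
  · rw [h, pow_zero]
  · apply Equiv.ext
    rintro ⟨t, e⟩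
    rw [show ((fun i => eta cs i) i * (fun i => eta cs i) j) = eta cs i * eta cs j from rfl,
      eta_mul_eta_pow]
    have hsgn : ∀ k : ℕ,
        (cs.simple j * (cs.simple i * cs.simple j) ^ (M i j + k) : W) =
        cs.simple j * (cs.simple i * cs.simple j) ^ k := by
      intro k
      rw [pow_add, cs.simple_mul_simple_pow i j, one_mul]
    rw [cs.simple_mul_simple_pow i j, two_mul, Finset.prod_range_add]
    simp only [hsgn]
    rw [← Finset.prod_mul_distrib]
    have hone : ∀ k ∈ Finset.range (M i j),
        ((if t = cs.simple j * (cs.simple i * cs.simple j) ^ k then (-1:ℤˣ) else 1) *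
         (if t = cs.simple j * (cs.simple i * cs.simple j) ^ k then (-1:ℤˣ) else 1)) = 1 := by
      intro k _
      split <;> simp
    rw [Finset.prod_congr rfl hone, Finset.prod_const_one, mul_one]
    simp

/-- The sign homomorphism `W →* Perm (W × ℤˣ)`. -/
def signHom (cs : CoxeterSystem M W) : W →* Equiv.Perm (W × ℤˣ) :=
  cs.lift ⟨fun i => eta cs i, eta_liftable cs⟩

lemma signHom_simple (cs : CoxeterSystem M W) (i : B) :
    signHom cs (cs.simple i) = eta cs i := cs.lift_apply_simple (eta_liftable cs) i

lemma signHom_apply_word (cs : CoxeterSystem M W) (ω : List B) (t : W) (e : ℤˣ) :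
    signHom cs (cs.wordProd ω) (t, e) =
      (cs.wordProd ω * t * (cs.wordProd ω)⁻¹,
        e * (signHom cs (cs.wordProd ω) (t, 1)).2) := by
  induction ω generalizing t e with
  | nil => simp
  | cons i ω ih =>
    rw [cs.wordProd_cons, map_mul, Equiv.Perm.mul_apply, Equiv.Perm.mul_apply,
      signHom_simple, ih t e, ih t 1, eta_apply, eta_apply]
    have hconj : cs.simple i * (cs.wordProd ω * t * (cs.wordProd ω)⁻¹) * cs.simple i
        = cs.simple i * cs.wordProd ω * t * (cs.simple i * cs.wordProd ω)⁻¹ := by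
      rw [mul_inv_rev, cs.inv_simple]
      simp only [mul_assoc]
    refine Prod.ext hconj ?_
    show (if cs.wordProd ω * t * (cs.wordProd ω)⁻¹ = cs.simple i then _ else _) = _
    dsimp only
    split <;> simp [mul_comm, mul_left_comm, mul_assoc]

lemma signHom_apply (cs : CoxeterSystem M W) (w t : W) (e : ℤˣ) :
    signHom cs w (t, e) = (w * t * w⁻¹, e * (signHom cs w (t, 1)).2) := by
  rcases cs.wordProd_surjective w with ⟨ω, rfl⟩
  exact signHom_apply_word cs ω t e

/-- The sign of `w` at `t`. -/
def sgn (cs : CoxeterSystem M W) (w t : W) : ℤˣ := (signHom cs w (t, 1)).2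

lemma signHom_apply' (cs : CoxeterSystem M W) (w t : W) (e : ℤˣ) :
    signHom cs w (t, e) = (w * t * w⁻¹, e * sgn cs w t) := signHom_apply cs w t e

lemma rightInvSeq_cons' (cs : CoxeterSystem M W) (i : B) (ω : List B) :
    cs.rightInvSeq (i :: ω) =
      ((cs.wordProd ω)⁻¹ * cs.simple i * cs.wordProd ω) :: cs.rightInvSeq ω := rfl

/-- If `t` does not occur in the right inversion sequence of `ω`, the sign is `1`. -/
lemma sgn_eq_one_of_not_mem (cs : CoxeterSystem M W) (ω : List B) (t : W)
    (h : t ∉ cs.rightInvSeq ω) : sgn cs (cs.wordProd ω) t = 1 := by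
  induction ω with
  | nil => simp [sgn, signHom]
  | cons i ω ih =>
    rw [rightInvSeq_cons', List.mem_cons] at h
    push_neg at h
    obtain ⟨h1, h2⟩ := h
    unfold sgn
    rw [cs.wordProd_cons, map_mul, Equiv.Perm.mul_apply, signHom_apply' cs (cs.wordProd ω) t 1,
      ih h2, mul_one, signHom_simple, eta_apply]
    dsimp only
    rw [if_neg ?_]
    intro hc
    apply h1
    rw [← hc]
    group

lemma signHom_refl_self (cs : CoxeterSystem M W) {t : W} (ht : cs.IsReflection t) (e : ℤˣ) :
    signHom cs t (t, e) = (t, -e) := by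
  obtain ⟨w, i, rfl⟩ := ht
  set t := w * cs.simple i * w⁻¹ with hT
  have hwit : w⁻¹ * t * w = cs.simple i := by rw [hT]; group
  have h1 : signHom cs w⁻¹ (t, e) = (cs.simple i, e * sgn cs w⁻¹ t) := by
    rw [signHom_apply' cs w⁻¹ t e, ← hwit]
    rw [inv_inv]
  have hcd : sgn cs w⁻¹ t * sgn cs w (cs.simple i) = 1 := by
    have h2 : signHom cs w (signHom cs w⁻¹ (t, 1)) = (t, 1) := by
      rw [← Equiv.Perm.mul_apply, ← map_mul, mul_inv_cancel, map_one, Equiv.Perm.one_apply]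
    rw [signHom_apply' cs w⁻¹ t 1, one_mul] at h2
    simp only [inv_inv] at h2
    rw [hwit, signHom_apply' cs w (cs.simple i)] at h2
    exact (Prod.ext_iff.mp h2).2
  have key : signHom cs t (t, e)
      = signHom cs w (eta cs i (signHom cs w⁻¹ (t, e))) := by
    rw [hT]
    rw [map_mul, map_mul, Equiv.Perm.mul_apply, Equiv.Perm.mul_apply, signHom_simple]
  rw [key, h1, eta_apply, if_pos rfl, cs.simple_mul_simple_self, one_mul,
    signHom_apply' cs w (cs.simple i)]
  refine Prod.ext ?_ ?_
  · show w * cs.simple i * w⁻¹ = t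
    rw [hT]
  · show -(e * sgn cs w⁻¹ t) * sgn cs w (cs.simple i) = -e
    rw [neg_mul, mul_assoc, hcd, mul_one]

lemma sgn_mul_refl (cs : CoxeterSystem M W) (w : W) {t : W} (ht : cs.IsReflection t) :
    sgn cs (w * t) t = - sgn cs w t := by
  have h1 : signHom cs (w * t) (t, 1) = signHom cs w (t, -1) := by
    rw [map_mul, Equiv.Perm.mul_apply, signHom_refl_self cs ht]
  show (signHom cs (w * t) (t, 1)).2 = _
  rw [h1, signHom_apply' cs w t (-1)]
  show -1 * sgn cs w t = - sgn cs w t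
  rw [neg_one_mul]

/-- Strong exchange, membership form. -/
lemma mem_rightInvSeq_of_isRightInversion (cs : CoxeterSystem M W) {ω : List B}
    (hred : cs.IsReduced ω) {t : W} (ht : cs.IsReflection t)
    (hlen : cs.length (cs.wordProd ω * t) < cs.length (cs.wordProd ω)) :
    t ∈ cs.rightInvSeq ω := by
  by_contra hmem
  have h1 : sgn cs (cs.wordProd ω) t = 1 := sgn_eq_one_of_not_mem cs ω t hmem
  obtain ⟨ω', hred', hw'⟩ := cs.exists_reduced_word' (cs.wordProd ω * t)
  have h2 : sgn cs (cs.wordProd ω * t) t = -1 := by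
    rw [sgn_mul_refl cs _ ht, h1]
  by_cases hmem' : t ∈ cs.rightInvSeq ω'
  · have h3 := cs.isRightInversion_of_mem_rightInvSeq hred' hmem'
    rw [← hw'] at h3
    have h4 := h3.2
    rw [mul_assoc, ht.mul_self, mul_one] at h4
    omega
  · have h3 : sgn cs (cs.wordProd ω * t) t = 1 := by
      rw [hw']
      exact sgn_eq_one_of_not_mem cs ω' t hmem'
    rw [h3] at h2
    exact absurd h2.symm (by decide)

/-- Strong exchange, eraseIdx form. -/
lemma exists_eraseIdx_of_isRightInversion (cs : CoxeterSystem M W) {ω : List B}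
    (hred : cs.IsReduced ω) {t : W} (ht : cs.IsReflection t)
    (hlen : cs.length (cs.wordProd ω * t) < cs.length (cs.wordProd ω)) :
    ∃ q, q < ω.length ∧ cs.wordProd ω * t = cs.wordProd (ω.eraseIdx q) := by
  have hmem := mem_rightInvSeq_of_isRightInversion cs hred ht hlen
  obtain ⟨q, hq, hqt⟩ := List.mem_iff_getElem.mp hmem
  rw [cs.length_rightInvSeq] at hq
  refine ⟨q, hq, ?_⟩
  rw [← cs.wordProd_mul_getD_rightInvSeq ω q]
  congr 1
  rw [List.getD_eq_getElem _ 1 (by rwa [cs.length_rightInvSeq])]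
  exact hqt.symm

/-- Simple-reflection exchange. -/
lemma exists_eraseIdx_of_descent (cs : CoxeterSystem M W) {ω : List B}
    (hred : cs.IsReduced ω) {i : B}
    (hlen : cs.length (cs.wordProd ω * cs.simple i) < cs.length (cs.wordProd ω)) :
    ∃ q, q < ω.length ∧ cs.wordProd ω * cs.simple i = cs.wordProd (ω.eraseIdx q) :=
  exists_eraseIdx_of_isRightInversion cs hred (cs.isReflection_simple i) hlen

/-- Deletion: every word has a reduced sublist with the same product. -/
lemma exists_reduced_sublist_aux (cs : CoxeterSystem M W) :
    ∀ (n : ℕ) (ω : List B), ω.length ≤ n →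
      ∃ ρ, ρ.Sublist ω ∧ cs.IsReduced ρ ∧ cs.wordProd ρ = cs.wordProd ω := by
  intro n
  induction n with
  | zero =>
    intro ω hω
    have : ω = [] := List.length_eq_zero_iff.mp (by omega)
    subst this
    exact ⟨[], List.Sublist.refl _, by simp [CoxeterSystem.IsReduced], rfl⟩
  | succ n ihn =>
    intro ω hω
    by_cases hred : cs.IsReduced ω
    · exact ⟨ω, List.Sublist.refl ω, hred, rfl⟩
    · have hP : ∃ k, ¬ cs.IsReduced (ω.take (k + 1)) := by
        refine ⟨ω.length, ?_⟩
        rwa [List.take_of_length_le (by omega)]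
      set k := Nat.find hP with hk
      have hk1 : ¬ cs.IsReduced (ω.take (k + 1)) := Nat.find_spec hP
      have hkred : cs.IsReduced (ω.take k) := by
        rcases Nat.eq_zero_or_pos k with h0 | h0
        · rw [h0, List.take_zero]
          unfold CoxeterSystem.IsReduced
          simp
        · have := Nat.find_min hP (m := k - 1) (by omega)
          rw [show k - 1 + 1 = k from by omega] at this
          exact not_not.mp this
      have hklt : k < ω.length := by
        by_contra hge
        rw [List.take_of_length_le (by omega)] at hk1
        rw [List.take_of_length_le (by omega)] at hkred
        exact hk1 hkred
      have htake : ω.take (k + 1) = ω.take k ++ [ω.get ⟨k, hklt⟩] := by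
        rw [← List.take_concat_get hklt]
        simp
      have hlendrop : cs.length (cs.wordProd (ω.take k) * cs.simple (ω.get ⟨k, hklt⟩))
          < cs.length (cs.wordProd (ω.take k)) := by
        have hlen1 : cs.wordProd (ω.take (k + 1)) =
            cs.wordProd (ω.take k) * cs.simple (ω.get ⟨k, hklt⟩) := by
          rw [htake, cs.wordProd_append]
          simp [cs.wordProd_cons]
        have hkl : (ω.take k).length = k := by
          rw [List.length_take]
          omega
        have hkl1 : (ω.take (k + 1)).length = k + 1 := by
          rw [List.length_take]
          omega
        rcases cs.length_mul_simple (cs.wordProd (ω.take k)) (ω.get ⟨k, hklt⟩) with h | h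
        · exfalso
          apply hk1
          unfold CoxeterSystem.IsReduced
          rw [hlen1, h, hkred, hkl, hkl1]
        · rw [hkred, hkl] at h ⊢
          omega
      obtain ⟨q, hq, hqe⟩ := exists_eraseIdx_of_descent cs hkred hlendrop
      set ω' := (ω.take k).eraseIdx q ++ ω.drop (k + 1) with hω'
      have hsub : ω'.Sublist ω := by
        have h1 : ((ω.take k).eraseIdx q).Sublist (ω.take k) := List.eraseIdx_sublist _ q
        have h2 : ω'.Sublist (ω.take k ++ ω.drop (k + 1)) := h1.append_right _
        refine h2.trans ?_
        have h3 : ω.take k ++ ω.drop (k + 1) = ω.eraseIdx k :=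
          (List.eraseIdx_eq_take_drop_succ _ _).symm
        rw [h3]
        exact List.eraseIdx_sublist _ k
      have hprod : cs.wordProd ω' = cs.wordProd ω := by
        conv_rhs => rw [← List.take_append_drop (k + 1) ω]
        rw [hω', cs.wordProd_append, cs.wordProd_append, ← hqe]
        congr 1
        rw [htake, cs.wordProd_append]
        simp [cs.wordProd_cons]
      have hlt : ω'.length ≤ n := by
        have h1 : ((ω.take k).eraseIdx q).length + 1 = (ω.take k).length :=
          List.length_eraseIdx_add_one hq
        have h2 : (ω.take k).length = k := by rw [List.length_take]; omega
        rw [hω', List.length_append, List.length_drop]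
        omega
      obtain ⟨ρ, hs, hr, hp⟩ := ihn ω' hlt
      exact ⟨ρ, hs.trans hsub, hr, by rw [hp, hprod]⟩

lemma exists_reduced_sublist (cs : CoxeterSystem M W) (ω : List B) :
    ∃ ρ, ρ.Sublist ω ∧ cs.IsReduced ρ ∧ cs.wordProd ρ = cs.wordProd ω :=
  exists_reduced_sublist_aux cs ω.length ω le_rfl

/-! ### Bruhat order -/

def bstep (cs : CoxeterSystem M W) : W → W → Prop :=
  fun x y => ∃ t, cs.IsReflection t ∧ y = x * t ∧ cs.length x < cs.length y

def Bruhat (cs : CoxeterSystem M W) : W → W → Prop := Relation.ReflTransGen (bstep cs)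

lemma bruhat_refl (cs : CoxeterSystem M W) (w : W) : Bruhat cs w w :=
  Relation.ReflTransGen.refl

lemma bruhat_trans {cs : CoxeterSystem M W} {u v w : W} (h1 : Bruhat cs u v)
    (h2 : Bruhat cs v w) : Bruhat cs u w := Relation.ReflTransGen.trans h1 h2

lemma bruhat_step_up {cs : CoxeterSystem M W} {x t : W} (ht : cs.IsReflection t)
    (h : cs.length x < cs.length (x * t)) : Bruhat cs x (x * t) :=
  Relation.ReflTransGen.single ⟨t, ht, rfl, h⟩

lemma bruhat_step_down {cs : CoxeterSystem M W} {x t : W} (ht : cs.IsReflection t)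
    (h : cs.length (x * t) < cs.length x) : Bruhat cs (x * t) x := by
  have he : x = (x * t) * t := by rw [mul_assoc, ht.mul_self, mul_one]
  exact Relation.ReflTransGen.single ⟨t, ht, he, h⟩

lemma bruhat_step_up_left {cs : CoxeterSystem M W} {x t : W} (ht : cs.IsReflection t)
    (h : cs.length x < cs.length (t * x)) : Bruhat cs x (t * x) := by
  have he : t * x = x * (x⁻¹ * t * x) := by group
  have hr : cs.IsReflection (x⁻¹ * t * x) := by
    have := ht.conj x⁻¹
    rwa [inv_inv] at this
  rw [he]
  exact bruhat_step_up hr (by rw [← he]; exact h)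

lemma bruhat_step_down_left {cs : CoxeterSystem M W} {x t : W} (ht : cs.IsReflection t)
    (h : cs.length (t * x) < cs.length x) : Bruhat cs (t * x) x := by
  have he : x = (t * x) * (x⁻¹ * t * x) := by
    have h2 := ht.mul_self
    calc x = (t * t) * x := by rw [h2, one_mul]
    _ = (t * x) * (x⁻¹ * t * x) := by group
  have hr : cs.IsReflection (x⁻¹ * t * x) := by
    have := ht.conj x⁻¹
    rwa [inv_inv] at this
  exact Relation.ReflTransGen.single ⟨x⁻¹ * t * x, hr, he, h⟩

lemma bruhat_length_le {cs : CoxeterSystem M W} {u w : W} (h : Bruhat cs u w) :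
    cs.length u ≤ cs.length w := by
  induction h with
  | refl => exact le_rfl
  | tail _ hstep ih => obtain ⟨t, _, _, hl⟩ := hstep; omega

lemma bruhat_eq_or_length_lt {cs : CoxeterSystem M W} {u w : W} (h : Bruhat cs u w) :
    u = w ∨ cs.length u < cs.length w := by
  induction h with
  | refl => exact Or.inl rfl
  | tail hb hstep ih =>
    obtain ⟨t, _, rfl, hl⟩ := hstep
    right
    have := bruhat_length_le hb
    omega

lemma bruhat_inv {cs : CoxeterSystem M W} {u w : W} (h : Bruhat cs u w) :
    Bruhat cs u⁻¹ w⁻¹ := by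
  induction h with
  | refl => exact bruhat_refl cs _
  | @tail x y hb hstep ih =>
    obtain ⟨t, ht, rfl, hl⟩ := hstep
    refine bruhat_trans ih ?_
    have he : (x * t)⁻¹ = t * x⁻¹ := by rw [mul_inv_rev, ht.inv]
    rw [he]
    refine bruhat_step_up_left ht ?_
    rw [← he, cs.length_inv, cs.length_inv]
    exact hl

/-- The fundamental lifting property (C1). -/
lemma bruhat_C1_aux (cs : CoxeterSystem M W) (j : B) :
    ∀ (n : ℕ) (u w : W), cs.length w ≤ n → Bruhat cs u w →
      cs.length (w * cs.simple j) < cs.length w →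
      cs.length u < cs.length (u * cs.simple j) →
      Bruhat cs u (w * cs.simple j) := by
  intro n
  induction n with
  | zero =>
    intro u w hwn hb hws hus
    omega
  | succ n ihn =>
    intro u w hwn hb hws hus
    rcases Relation.ReflTransGen.cases_tail hb with rfl | ⟨w', hb', hstep⟩
    · have h1 := bruhat_length_le hb
      omega
    · obtain ⟨t, hrt, rfl, hlt⟩ := hstep
      by_cases hw's : cs.length (w' * cs.simple j) < cs.length w'
      · have ih1 : Bruhat cs u (w' * cs.simple j) :=
          ihn u w' (by omega) hb' hw's hus
        refine bruhat_trans ih1 ?_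
        have he : w' * t * cs.simple j =
            (w' * cs.simple j) * (cs.simple j * t * cs.simple j) := by
          simp only [mul_assoc, cs.simple_mul_simple_cancel_left]
        have hr : cs.IsReflection (cs.simple j * t * cs.simple j) := by
          have := hrt.conj (cs.simple j)
          rwa [cs.inv_simple] at this
        rw [he]
        refine bruhat_step_up hr ?_
        rw [← he]
        have e1 : cs.length (w' * cs.simple j) + 1 = cs.length w' :=
          (cs.length_mul_simple w' j).resolve_left (by omega)
        have e2 : cs.length (w' * t * cs.simple j) + 1 = cs.length (w' * t) :=
          (cs.length_mul_simple (w' * t) j).resolve_left (by omega)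
        omega
      · have hw'up : cs.length w' < cs.length (w' * cs.simple j) := by
          have := cs.length_mul_simple_ne w' j
          omega
        by_cases hcmp : cs.length (w' * cs.simple j) < cs.length (w' * t * cs.simple j)
        · refine bruhat_trans hb' (bruhat_trans (bruhat_step_up (cs.isReflection_simple j) hw'up) ?_)
          have he : w' * t * cs.simple j =
              (w' * cs.simple j) * (cs.simple j * t * cs.simple j) := by
            simp only [mul_assoc, cs.simple_mul_simple_cancel_left]
          have hr : cs.IsReflection (cs.simple j * t * cs.simple j) := by
            have := hrt.conj (cs.simple j)
            rwa [cs.inv_simple] at this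
          rw [he]
          exact bruhat_step_up hr (by rw [← he]; exact hcmp)
        · -- "cover" case: use strong exchange
          obtain ⟨η, hηred, hηw⟩ := cs.exists_reduced_word' (w' * t * cs.simple j)
          have hηlen : η.length = cs.length (w' * t * cs.simple j) := by
            rw [hηw]; exact hηred.symm
          have hρprod : cs.wordProd (η ++ [j]) = w' * t := by
            rw [cs.wordProd_append, ← hηw, cs.wordProd_cons, cs.wordProd_nil, mul_one,
              cs.simple_mul_simple_cancel_right]
          have hwts : cs.length (w' * t * cs.simple j) + 1 = cs.length (w' * t) :=
            (cs.length_mul_simple (w' * t) j).resolve_left (by omega)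
          have hρred : cs.IsReduced (η ++ [j]) := by
            unfold CoxeterSystem.IsReduced
            rw [hρprod, List.length_append, hηlen]
            simp only [List.length_singleton]
            omega
          have hwt : w' * t * t = w' := by rw [mul_assoc, hrt.mul_self, mul_one]
          have hex : cs.length (cs.wordProd (η ++ [j]) * t) < cs.length (cs.wordProd (η ++ [j])) := by
            rw [hρprod, hwt]
            exact hlt
          obtain ⟨q, hql, hqe⟩ := exists_eraseIdx_of_isRightInversion cs hρred hrt hex
          rw [hρprod, hwt] at hqe
          by_cases hq : q = η.length
          · rw [hq, List.eraseIdx_append_of_length_le le_rfl, Nat.sub_self,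
              List.eraseIdx_zero, List.tail, List.append_nil] at hqe
            rw [← hηw] at hqe
            rw [← hqe]
            exact hb'
          · exfalso
            have hqlt : q < η.length := by
              rw [List.length_append, List.length_singleton] at hql
              omega
            rw [List.eraseIdx_append_of_lt_length hqlt] at hqe
            have : cs.length (w' * cs.simple j) ≤ (η.eraseIdx q).length := by
              have he2 : w' * cs.simple j = cs.wordProd (η.eraseIdx q) := by
                rw [hqe, cs.wordProd_append, cs.wordProd_cons, cs.wordProd_nil, mul_one,
                  cs.simple_mul_simple_cancel_right]
              rw [he2]
              exact cs.length_wordProd_le _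
            have hle : (η.eraseIdx q).length + 1 = η.length :=
              List.length_eraseIdx_add_one hqlt
            have e1 : cs.length (w' * t * cs.simple j) + 1 = cs.length (w' * t) := hwts
            omega

lemma bruhat_C1 {cs : CoxeterSystem M W} {u w : W} {j : B} (hb : Bruhat cs u w)
    (hws : cs.length (w * cs.simple j) < cs.length w)
    (hus : cs.length u < cs.length (u * cs.simple j)) :
    Bruhat cs u (w * cs.simple j) :=
  bruhat_C1_aux cs j (cs.length w) u w le_rfl hb hws hus

lemma bruhat_C2 {cs : CoxeterSystem M W} {u w : W} {j : B} (hb : Bruhat cs u w)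
    (hus : cs.length (u * cs.simple j) < cs.length u)
    (hws : cs.length (w * cs.simple j) < cs.length w) :
    Bruhat cs (u * cs.simple j) (w * cs.simple j) := by
  have h1 : Bruhat cs (u * cs.simple j) w :=
    bruhat_trans (bruhat_step_down (cs.isReflection_simple j) hus) hb
  refine bruhat_C1 h1 hws ?_
  rw [mul_assoc, cs.simple_mul_simple_self, mul_one]
  exact hus

lemma bruhat_C4_aux (cs : CoxeterSystem M W) (j : B) :
    ∀ (n : ℕ) (u y : W), cs.length y ≤ n → Bruhat cs u y →
      cs.length u < cs.length (u * cs.simple j) →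
      cs.length y < cs.length (y * cs.simple j) →
      Bruhat cs (u * cs.simple j) (y * cs.simple j) := by
  intro n
  induction n with
  | zero =>
    intro u y hyn hb hus hys
    have h1 := bruhat_length_le hb
    have h2 : u = y := by
      rcases bruhat_eq_or_length_lt hb with h | h
      · exact h
      · omega
    rw [h2]
    exact bruhat_refl cs _
  | succ n ihn =>
    intro u y hyn hb hus hys
    rcases Relation.ReflTransGen.cases_tail hb with rfl | ⟨y', hb', hstep⟩
    · exact bruhat_refl cs _
    · obtain ⟨t, hrt, rfl, hlt⟩ := hstep
      have hr : cs.IsReflection (cs.simple j * t * cs.simple j) := by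
        have := hrt.conj (cs.simple j)
        rwa [cs.inv_simple] at this
      have he : y' * t * cs.simple j =
          (y' * cs.simple j) * (cs.simple j * t * cs.simple j) := by
        simp only [mul_assoc, cs.simple_mul_simple_cancel_left]
      by_cases hy's : cs.length (y' * cs.simple j) < cs.length y'
      · -- descent of y' : go down and around
        have h1 : Bruhat cs u (y' * cs.simple j) := bruhat_C1 hb' hy's hus
        have h2 : Bruhat cs (u * cs.simple j) ((y' * cs.simple j) * cs.simple j) := by
          refine ihn u (y' * cs.simple j) (by omega) h1 hus ?_
          rw [mul_assoc, cs.simple_mul_simple_self, mul_one]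
          exact hy's
        rw [mul_assoc, cs.simple_mul_simple_self, mul_one] at h2
        -- now u * s ≤ y' ⋖ y' * t = y ⋖ y * s
        refine bruhat_trans h2 (bruhat_trans (bruhat_step_up hrt hlt) ?_)
        exact bruhat_step_up (cs.isReflection_simple j) hys
      · have hy'up : cs.length y' < cs.length (y' * cs.simple j) := by
          have := cs.length_mul_simple_ne y' j
          omega
        have h1 : Bruhat cs (u * cs.simple j) (y' * cs.simple j) :=
          ihn u y' (by omega) hb' hus hy'up
        refine bruhat_trans h1 ?_
        rw [he]
        refine bruhat_step_up hr ?_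
        rw [← he]
        have e1 : cs.length (y' * cs.simple j) = cs.length y' + 1 :=
          (cs.length_mul_simple y' j).resolve_right (by omega)
        have e2 : cs.length (y' * t * cs.simple j) = cs.length (y' * t) + 1 :=
          (cs.length_mul_simple (y' * t) j).resolve_right (by omega)
        omega

lemma bruhat_C4 {cs : CoxeterSystem M W} {u y : W} {j : B} (hb : Bruhat cs u y)
    (hus : cs.length u < cs.length (u * cs.simple j))
    (hys : cs.length y < cs.length (y * cs.simple j)) :
    Bruhat cs (u * cs.simple j) (y * cs.simple j) :=
  bruhat_C4_aux cs j (cs.length y) u y le_rfl hb hus hys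

/-! Left-handed lifting lemmas -/

lemma bruhat_C1_left {cs : CoxeterSystem M W} {u w : W} {j : B} (hb : Bruhat cs u w)
    (hws : cs.length (cs.simple j * w) < cs.length w)
    (hus : cs.length u < cs.length (cs.simple j * u)) :
    Bruhat cs u (cs.simple j * w) := by
  have h1 : Bruhat cs u⁻¹ (w⁻¹ * cs.simple j) := by
    refine bruhat_C1 (bruhat_inv hb) ?_ ?_
    · have he : w⁻¹ * cs.simple j = (cs.simple j * w)⁻¹ := by
        rw [mul_inv_rev, cs.inv_simple]
      rw [he, cs.length_inv, cs.length_inv]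
      exact hws
    · have he : u⁻¹ * cs.simple j = (cs.simple j * u)⁻¹ := by
        rw [mul_inv_rev, cs.inv_simple]
      rw [he, cs.length_inv, cs.length_inv]
      exact hus
  have h2 := bruhat_inv h1
  rw [inv_inv, mul_inv_rev, cs.inv_simple, inv_inv] at h2
  exact h2

lemma bruhat_C2_left {cs : CoxeterSystem M W} {u w : W} {j : B} (hb : Bruhat cs u w)
    (hus : cs.length (cs.simple j * u) < cs.length u)
    (hws : cs.length (cs.simple j * w) < cs.length w) :
    Bruhat cs (cs.simple j * u) (cs.simple j * w) := by
  have h1 : Bruhat cs (u⁻¹ * cs.simple j) (w⁻¹ * cs.simple j) := by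
    refine bruhat_C2 (bruhat_inv hb) ?_ ?_
    · have he : u⁻¹ * cs.simple j = (cs.simple j * u)⁻¹ := by
        rw [mul_inv_rev, cs.inv_simple]
      rw [he, cs.length_inv, cs.length_inv]
      exact hus
    · have he : w⁻¹ * cs.simple j = (cs.simple j * w)⁻¹ := by
        rw [mul_inv_rev, cs.inv_simple]
      rw [he, cs.length_inv, cs.length_inv]
      exact hws
  have h2 := bruhat_inv h1
  rw [mul_inv_rev, mul_inv_rev, cs.inv_simple, inv_inv, inv_inv] at h2
  exact h2

end TwistedCoxeterAux

namespace TwistedCoxeter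


section Development
open TwistedCoxeterAux CoxeterSystem

variable {B : Type*} {W : Type*} [Group W] {M : CoxeterMatrix B} {cs : CoxeterSystem M W}
variable (t : Twisting cs)

lemma auto_wordProd (ω : List B) : t.auto (cs.wordProd ω) = cs.wordProd (ω.map t.star) := by
  induction ω with
  | nil => simp [cs.wordProd_nil]
  | cons i ω ih =>
    rw [cs.wordProd_cons, map_mul, t.auto_simple, ih, List.map_cons, cs.wordProd_cons]

lemma length_auto (w : W) : cs.length (t.auto w) = cs.length w := by
  have key : ∀ v : W, cs.length (t.auto v) ≤ cs.length v := by
    intro v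
    obtain ⟨ω, hlen, hv⟩ := cs.exists_reduced_word v
    replace hlen : ω.length = cs.length v := by rw [hv]; exact Eq.symm hlen
    rw [hv, auto_wordProd]
    calc cs.length (cs.wordProd (ω.map t.star)) ≤ (ω.map t.star).length :=
          cs.length_wordProd_le _
    _ = ω.length := List.length_map _
    _ = cs.length (cs.wordProd ω) := by rw [hlen, hv]
  have h2 := key (t.auto w)
  rw [t.auto_auto] at h2
  exact le_antisymm (key w) h2

lemma auto_simple_inv (j : B) : (t.auto (cs.simple j))⁻¹ = t.auto (cs.simple j) := by
  rw [t.auto_simple, cs.inv_simple]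

lemma auto_simple_mul_self (j : B) : t.auto (cs.simple j) * t.auto (cs.simple j) = 1 := by
  rw [t.auto_simple, cs.simple_mul_simple_self]

lemma ti_one : IsTwistedInvolution t 1 := by
  unfold IsTwistedInvolution
  rw [map_one, inv_one]

lemma ti_length_simple_mul {w : W} (hw : IsTwistedInvolution t w) (j : B) :
    cs.length (t.auto (cs.simple j) * w) = cs.length (w * cs.simple j) := by
  have h1 : t.auto (w * cs.simple j) = w⁻¹ * t.auto (cs.simple j) := by
    rw [map_mul, hw]
  calc cs.length (t.auto (cs.simple j) * w)
      = cs.length ((t.auto (cs.simple j) * w)⁻¹) := (cs.length_inv _).symm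
    _ = cs.length (w⁻¹ * t.auto (cs.simple j)) := by
        rw [mul_inv_rev, auto_simple_inv]
    _ = cs.length (t.auto (w * cs.simple j)) := by rw [h1]
    _ = cs.length (w * cs.simple j) := length_auto t _

lemma ti_conj {z : W} (hz : IsTwistedInvolution t z) (j : B) :
    IsTwistedInvolution t (t.auto (cs.simple j) * z * cs.simple j) := by
  unfold IsTwistedInvolution at *
  rw [map_mul, map_mul, t.auto_auto, hz, mul_inv_rev, mul_inv_rev, cs.inv_simple,
    auto_simple_inv]
  simp [mul_assoc]

lemma ti_mul_simple {z : W} (hz : IsTwistedInvolution t z) {j : B}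
    (h : t.auto (cs.simple j) * z * cs.simple j = z) :
    IsTwistedInvolution t (z * cs.simple j) := by
  unfold IsTwistedInvolution at *
  have h2 : z⁻¹ * t.auto (cs.simple j) = cs.simple j * z⁻¹ := by
    have h3 : t.auto (cs.simple j) * z = z * cs.simple j := by
      have := congrArg (fun x => x * cs.simple j) h
      simpa [mul_assoc, cs.simple_mul_simple_self] using this
    have := congrArg (fun x : W => x⁻¹) h3
    simp only [mul_inv_rev, auto_simple_inv, cs.inv_simple] at this
    exact this
  rw [map_mul, hz, mul_inv_rev, cs.inv_simple]
  exact h2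

lemma ti_up_dichotomy {z : W} (hz : IsTwistedInvolution t z) {j : B}
    (hup : cs.length z < cs.length (z * cs.simple j))
    (hne : t.auto (cs.simple j) * z * cs.simple j ≠ z) :
    cs.length (t.auto (cs.simple j) * z * cs.simple j) = cs.length z + 2 := by
  have hzs : cs.length (z * cs.simple j) = cs.length z + 1 :=
    (cs.length_mul_simple z j).resolve_right (by omega)
  have hsz : cs.length (t.auto (cs.simple j) * z) = cs.length z + 1 := by
    rw [ti_length_simple_mul t hz j, hzs]
  obtain ⟨ω, hlen, hzw⟩ := cs.exists_reduced_word z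
  replace hlen : ω.length = cs.length z := by rw [hzw]; exact Eq.symm hlen
  have hρprod : cs.wordProd (t.star j :: ω) = t.auto (cs.simple j) * z := by
    rw [cs.wordProd_cons, ← hzw, t.auto_simple]
  have hρred : cs.IsReduced (t.star j :: ω) := by
    unfold CoxeterSystem.IsReduced
    rw [hρprod, hsz, List.length_cons, hlen]
  rcases cs.length_mul_simple (t.auto (cs.simple j) * z) j with h | h
  · omega
  · exfalso
    have hexlen : cs.length (cs.wordProd (t.star j :: ω) * cs.simple j) <
        cs.length (cs.wordProd (t.star j :: ω)) := by
      rw [hρprod]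
      omega
    obtain ⟨q, hql, hqe⟩ := exists_eraseIdx_of_descent cs hρred hexlen
    rw [hρprod] at hqe
    rcases q with _ | q'
    · rw [List.eraseIdx_cons_zero, ← hzw] at hqe
      exact hne hqe
    · rw [List.eraseIdx_cons_succ, cs.wordProd_cons, ← t.auto_simple] at hqe
      have h2 : z * cs.simple j = cs.wordProd (ω.eraseIdx q') := by
        have h3 := congrArg (fun x => t.auto (cs.simple j) * x) hqe
        simp only [← mul_assoc] at h3
        rw [auto_simple_mul_self] at h3
        simpa using h3
      have h4 : cs.length (z * cs.simple j) ≤ (ω.eraseIdx q').length := by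
        rw [h2]; exact cs.length_wordProd_le _
      have h5 : (ω.eraseIdx q').length + 1 = ω.length := by
        refine List.length_eraseIdx_add_one ?_
        rw [List.length_cons] at hql
        omega
      omega

lemma ti_down_dichotomy {w : W} (hw : IsTwistedInvolution t w) {j : B}
    (hdown : cs.length (w * cs.simple j) < cs.length w)
    (hne : t.auto (cs.simple j) * w * cs.simple j ≠ w) :
    cs.length (t.auto (cs.simple j) * w * cs.simple j) + 2 = cs.length w := by
  have hws : cs.length (w * cs.simple j) + 1 = cs.length w :=
    (cs.length_mul_simple w j).resolve_left (by omega)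
  have hassoc : t.auto (cs.simple j) * w * cs.simple j
      = t.auto (cs.simple j) * (w * cs.simple j) := mul_assoc _ _ _
  rcases cs.length_simple_mul (w * cs.simple j) (t.star j) with h | h
  · exfalso
    rw [← t.auto_simple] at h
    obtain ⟨ω, hlen, hyw⟩ := cs.exists_reduced_word (w * cs.simple j)
    replace hlen : ω.length = cs.length (w * cs.simple j) := by rw [hyw]; exact Eq.symm hlen
    have hρprod : cs.wordProd (t.star j :: ω) = t.auto (cs.simple j) * (w * cs.simple j) := by
      rw [cs.wordProd_cons, ← hyw, t.auto_simple]
    have hρred : cs.IsReduced (t.star j :: ω) := by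
      unfold CoxeterSystem.IsReduced
      rw [hρprod, h, List.length_cons, hlen]
    have hcanc : t.auto (cs.simple j) * (w * cs.simple j) * cs.simple j
        = t.auto (cs.simple j) * w := by
      simp [mul_assoc, cs.simple_mul_simple_self]
    have hexlen : cs.length (cs.wordProd (t.star j :: ω) * cs.simple j) <
        cs.length (cs.wordProd (t.star j :: ω)) := by
      rw [hρprod, hcanc, h, ti_length_simple_mul t hw j]
      omega
    obtain ⟨q, hql, hqe⟩ := exists_eraseIdx_of_descent cs hρred hexlen
    rw [hρprod, hcanc] at hqe
    rcases q with _ | q'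
    · rw [List.eraseIdx_cons_zero, ← hyw] at hqe
      apply hne
      rw [hqe, mul_assoc, cs.simple_mul_simple_self, mul_one]
    · rw [List.eraseIdx_cons_succ, cs.wordProd_cons, ← t.auto_simple] at hqe
      have h2 : w = cs.wordProd (ω.eraseIdx q') := by
        have h3 := congrArg (fun x => t.auto (cs.simple j) * x) hqe
        simp only [← mul_assoc] at h3
        rw [auto_simple_mul_self] at h3
        simpa using h3
      have h4 : cs.length w ≤ (ω.eraseIdx q').length := by
        rw [h2]
        exact cs.length_wordProd_le _
      have h5 : (ω.eraseIdx q').length + 1 = ω.length := by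
        refine List.length_eraseIdx_add_one ?_
        rw [List.length_cons] at hql
        omega
      omega
  · rw [← t.auto_simple, ← hassoc] at h
    omega

/-- The descent operation `v` from the theorem statement. -/
def vdown (t : Twisting cs) (w : W) (i : B) : W :=
  if t.auto (cs.simple i) * w * cs.simple i = w then w * cs.simple i
  else t.auto (cs.simple i) * w * cs.simple i

lemma iota_concat (a : List B) (i : B) : iota t (a ++ [i]) = invStep t (iota t a) i := by
  simp [iota, List.foldl_append]

lemma iota_nil : iota t [] = 1 := rfl

lemma iota_ti (a : List B) : IsTwistedInvolution t (iota t a) := by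
  induction a using List.reverseRecOn with
  | nil => exact ti_one t
  | append_singleton a i ih =>
    rw [iota_concat]
    unfold invStep
    split
    · exact ih
    · split
      · exact ti_mul_simple t ih ‹_›
      · exact ti_conj t ih i

lemma invStep_descent {z : W} {j : B} (hd : cs.length (z * cs.simple j) < cs.length z) :
    invStep t z j = z := by
  unfold invStep
  rw [if_pos hd]

lemma vdown_spec {w : W} (hw : IsTwistedInvolution t w) {j : B}
    (hd : cs.length (w * cs.simple j) < cs.length w) :
    IsTwistedInvolution t (vdown t w j) ∧ cs.length (vdown t w j) < cs.length w ∧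
      invStep t (vdown t w j) j = w := by
  have hws : cs.length (w * cs.simple j) + 1 = cs.length w :=
    (cs.length_mul_simple w j).resolve_left (by omega)
  unfold vdown
  by_cases h : t.auto (cs.simple j) * w * cs.simple j = w
  · rw [if_pos h]
    refine ⟨ti_mul_simple t hw h, hd, ?_⟩
    unfold invStep
    have hlen : cs.length (w * cs.simple j * cs.simple j) = cs.length w := by
      rw [mul_assoc, cs.simple_mul_simple_self, mul_one]
    rw [if_neg (by omega)]
    have h1 : t.auto (cs.simple j) * w = w * cs.simple j := by
      have := congrArg (fun x => x * cs.simple j) h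
      simpa [mul_assoc, cs.simple_mul_simple_self] using this
    have hcond : t.auto (cs.simple j) * (w * cs.simple j) * cs.simple j = w * cs.simple j := by
      calc t.auto (cs.simple j) * (w * cs.simple j) * cs.simple j
          = t.auto (cs.simple j) * w := by simp [mul_assoc, cs.simple_mul_simple_self]
      _ = w * cs.simple j := h1
    rw [if_pos hcond, mul_assoc, cs.simple_mul_simple_self, mul_one]
  · rw [if_neg h]
    have hlen2 : cs.length (t.auto (cs.simple j) * w * cs.simple j) + 2 = cs.length w :=
      ti_down_dichotomy t hw hd h
    refine ⟨ti_conj t hw j, by omega, ?_⟩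
    unfold invStep
    have hvs : t.auto (cs.simple j) * w * cs.simple j * cs.simple j
        = t.auto (cs.simple j) * w := by
      rw [mul_assoc (t.auto (cs.simple j) * w), cs.simple_mul_simple_self, mul_one]
    have hlvs : cs.length (t.auto (cs.simple j) * w * cs.simple j * cs.simple j)
        = cs.length (w * cs.simple j) := by
      rw [hvs, ti_length_simple_mul t hw j]
    rw [if_neg (by omega)]
    have hback : t.auto (cs.simple j) * (t.auto (cs.simple j) * w * cs.simple j) *
        cs.simple j = w := by
      simp only [← mul_assoc]
      rw [auto_simple_mul_self]
      simp [mul_assoc, cs.simple_mul_simple_self]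
    have hcond : ¬ (t.auto (cs.simple j) * (t.auto (cs.simple j) * w * cs.simple j) *
        cs.simple j = t.auto (cs.simple j) * w * cs.simple j) := by
      rw [hback]
      intro hc
      rw [← hc] at hlen2
      omega
    rw [if_neg hcond, hback]

lemma invStep_up_spec {z : W} (hz : IsTwistedInvolution t z) {j : B}
    (hup : cs.length z < cs.length (z * cs.simple j)) :
    cs.length z < cs.length (invStep t z j) ∧ invStep t z j ≠ z ∧
      cs.length (invStep t z j * cs.simple j) < cs.length (invStep t z j) ∧
      vdown t (invStep t z j) j = z := by
  have hzs : cs.length (z * cs.simple j) = cs.length z + 1 :=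
    (cs.length_mul_simple z j).resolve_right (by omega)
  unfold invStep
  rw [if_neg (by omega)]
  by_cases h : t.auto (cs.simple j) * z * cs.simple j = z
  · rw [if_pos h]
    have hne : z * cs.simple j ≠ z := by
      intro hc
      have := congrArg cs.length hc
      omega
    have hcanc : z * cs.simple j * cs.simple j = z := by
      rw [mul_assoc, cs.simple_mul_simple_self, mul_one]
    refine ⟨by omega, hne, by rw [hcanc]; omega, ?_⟩
    unfold vdown
    have h1 : t.auto (cs.simple j) * z = z * cs.simple j := by
      have := congrArg (fun x => x * cs.simple j) h
      simpa [mul_assoc, cs.simple_mul_simple_self] using this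
    have hcond : t.auto (cs.simple j) * (z * cs.simple j) * cs.simple j = z * cs.simple j := by
      calc t.auto (cs.simple j) * (z * cs.simple j) * cs.simple j
          = t.auto (cs.simple j) * z := by simp [mul_assoc, cs.simple_mul_simple_self]
      _ = z * cs.simple j := h1
    rw [if_pos hcond, hcanc]
  · rw [if_neg h]
    have hlen2 : cs.length (t.auto (cs.simple j) * z * cs.simple j) = cs.length z + 2 :=
      ti_up_dichotomy t hz hup h
    have hne : t.auto (cs.simple j) * z * cs.simple j ≠ z := h
    have hvs : t.auto (cs.simple j) * z * cs.simple j * cs.simple j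
        = t.auto (cs.simple j) * z := by
      rw [mul_assoc (t.auto (cs.simple j) * z), cs.simple_mul_simple_self, mul_one]
    have hlvs : cs.length (t.auto (cs.simple j) * z * cs.simple j * cs.simple j)
        = cs.length z + 1 := by
      rw [hvs, ti_length_simple_mul t hz j, hzs]
    have hback : t.auto (cs.simple j) * (t.auto (cs.simple j) * z * cs.simple j) *
        cs.simple j = z := by
      simp only [← mul_assoc]
      rw [auto_simple_mul_self]
      simp [mul_assoc, cs.simple_mul_simple_self]
    refine ⟨by omega, hne, by omega, ?_⟩
    unfold vdown
    have hcond : ¬ (t.auto (cs.simple j) * (t.auto (cs.simple j) * z * cs.simple j) *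
        cs.simple j = t.auto (cs.simple j) * z * cs.simple j) := by
      rw [hback]
      intro hc
      rw [← hc] at hlen2
      omega
    rw [if_neg hcond, hback]

lemma exists_iota_word_aux :
    ∀ (n : ℕ) (w : W), cs.length w ≤ n → IsTwistedInvolution t w → ∃ a, iota t a = w := by
  intro n
  induction n with
  | zero =>
    intro w hwn hw
    have h1 : w = 1 := cs.length_eq_zero_iff.mp (by omega)
    exact ⟨[], by rw [iota_nil, h1]⟩
  | succ n ihn =>
    intro w hwn hw
    by_cases h1 : w = 1
    · exact ⟨[], by rw [iota_nil, h1]⟩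
    · obtain ⟨j, hj⟩ := cs.exists_rightDescent_of_ne_one h1
      have hd : cs.length (w * cs.simple j) < cs.length w := hj
      obtain ⟨hvti, hvlt, hvinv⟩ := vdown_spec t hw hd
      obtain ⟨a, ha⟩ := ihn (vdown t w j) (by omega) hvti
      exact ⟨a ++ [j], by rw [iota_concat, ha, hvinv]⟩

lemma exists_iota_word {w : W} (hw : IsTwistedInvolution t w) : ∃ a, iota t a = w :=
  exists_iota_word_aux t (cs.length w) w le_rfl hw

lemma hat_le (b : List B) {w : W} (hb : iota t b = w) : hatLength t w ≤ b.length :=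
  Nat.sInf_le ⟨b, hb, rfl⟩

lemma hat_spec {w : W} (hw : IsTwistedInvolution t w) :
    ∃ a, iota t a = w ∧ a.length = hatLength t w := by
  obtain ⟨a0, ha0⟩ := exists_iota_word t hw
  have hne : {n | ∃ a : List B, iota t a = w ∧ a.length = n}.Nonempty :=
    ⟨a0.length, a0, ha0, rfl⟩
  obtain ⟨a, ha, hlen⟩ := Nat.sInf_mem hne
  exact ⟨a, ha, hlen⟩

/-- Twisted lifting, ascent form. -/
lemma tl1 {u w : W} (hu : IsTwistedInvolution t u) (hw : IsTwistedInvolution t w)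
    (hb : Bruhat cs u w) {j : B}
    (hws : cs.length (w * cs.simple j) < cs.length w)
    (hus : cs.length u < cs.length (u * cs.simple j)) :
    Bruhat cs u (vdown t w j) := by
  unfold vdown
  by_cases h : t.auto (cs.simple j) * w * cs.simple j = w
  · rw [if_pos h]
    exact bruhat_C1 hb hws hus
  · rw [if_neg h]
    have h1 : Bruhat cs u (w * cs.simple j) := bruhat_C1 hb hws hus
    have hlen2 := ti_down_dichotomy t hw hws h
    have hws1 : cs.length (w * cs.simple j) + 1 = cs.length w :=
      (cs.length_mul_simple w j).resolve_left (by omega)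
    have h2 : cs.length (cs.simple (t.star j) * (w * cs.simple j)) <
        cs.length (w * cs.simple j) := by
      rw [← t.auto_simple, ← mul_assoc]
      omega
    have h3 : cs.length u < cs.length (cs.simple (t.star j) * u) := by
      rw [← t.auto_simple, ti_length_simple_mul t hu j]
      exact hus
    have h4 := bruhat_C1_left h1 h2 h3
    rw [← t.auto_simple, ← mul_assoc] at h4
    exact h4

/-- Twisted lifting, double-descent form. -/
lemma tl2 {u w : W} (hu : IsTwistedInvolution t u) (hw : IsTwistedInvolution t w)
    (hb : Bruhat cs u w) {j : B}
    (hus : cs.length (u * cs.simple j) < cs.length u)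
    (hws : cs.length (w * cs.simple j) < cs.length w) :
    Bruhat cs (vdown t u j) (vdown t w j) := by
  have hC2 : Bruhat cs (u * cs.simple j) (w * cs.simple j) := bruhat_C2 hb hus hws
  have hus1 : cs.length (u * cs.simple j) + 1 = cs.length u :=
    (cs.length_mul_simple u j).resolve_left (by omega)
  have hws1 : cs.length (w * cs.simple j) + 1 = cs.length w :=
    (cs.length_mul_simple w j).resolve_left (by omega)
  unfold vdown
  by_cases h1 : t.auto (cs.simple j) * u * cs.simple j = u
  · rw [if_pos h1]
    by_cases h2 : t.auto (cs.simple j) * w * cs.simple j = w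
    · rw [if_pos h2]
      exact hC2
    · rw [if_neg h2]
      have hlw := ti_down_dichotomy t hw hws h2
      have ha : cs.length (cs.simple (t.star j) * (w * cs.simple j)) <
          cs.length (w * cs.simple j) := by
        rw [← t.auto_simple, ← mul_assoc]
        omega
      have hb2 : cs.length (u * cs.simple j) <
          cs.length (cs.simple (t.star j) * (u * cs.simple j)) := by
        rw [← t.auto_simple, ← mul_assoc, h1]
        omega
      have h4 := bruhat_C1_left hC2 ha hb2
      rw [← t.auto_simple, ← mul_assoc] at h4
      exact h4
  · rw [if_neg h1]
    have hlu := ti_down_dichotomy t hu hus h1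
    by_cases h2 : t.auto (cs.simple j) * w * cs.simple j = w
    · rw [if_pos h2]
      have hd : cs.length (cs.simple (t.star j) * (u * cs.simple j)) <
          cs.length (u * cs.simple j) := by
        rw [← t.auto_simple, ← mul_assoc]
        omega
      have h5 := bruhat_step_down_left (cs.isReflection_simple (t.star j)) hd
      rw [← t.auto_simple, ← mul_assoc] at h5
      exact bruhat_trans h5 hC2
    · rw [if_neg h2]
      have hlw := ti_down_dichotomy t hw hws h2
      have hdu : cs.length (cs.simple (t.star j) * (u * cs.simple j)) <
          cs.length (u * cs.simple j) := by
        rw [← t.auto_simple, ← mul_assoc]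
        omega
      have hdw : cs.length (cs.simple (t.star j) * (w * cs.simple j)) <
          cs.length (w * cs.simple j) := by
        rw [← t.auto_simple, ← mul_assoc]
        omega
      have h5 := bruhat_C2_left hC2 hdu hdw
      rw [← t.auto_simple, ← mul_assoc, ← mul_assoc] at h5
      exact h5

/-- Monotonicity of `hatLength` along (strict) Bruhat order on twisted involutions. -/
lemma hat_mono_aux :
    ∀ (n : ℕ) (u w : W), cs.length w ≤ n → IsTwistedInvolution t u →
      IsTwistedInvolution t w → Bruhat cs u w → u ≠ w →
      hatLength t u < hatLength t w := by
  intro n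
  induction n with
  | zero =>
    intro u w hwn hu hw hb hne
    rcases bruhat_eq_or_length_lt hb with h | h
    · exact absurd h hne
    · omega
  | succ n ihn =>
    intro u w hwn hu hw hb hne
    have hlt : cs.length u < cs.length w := (bruhat_eq_or_length_lt hb).resolve_left hne
    obtain ⟨a, ha, halen⟩ := hat_spec t hw
    rcases a.eq_nil_or_concat with rfl | ⟨b, j, rfl⟩
    · exfalso
      rw [iota_nil] at ha
      rw [← ha, cs.length_one] at hlt
      omega
    · rw [List.concat_eq_append] at ha halen
      have hw' : invStep t (iota t b) j = w := by rw [← iota_concat, ha]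
      have hzti := iota_ti t b
      have hblen : b.length + 1 = hatLength t w := by
        rw [← halen, List.length_append, List.length_singleton]
      by_cases hzw : iota t b = w
      · exfalso
        have := hat_le t b hzw
        omega
      · have hzup : ¬ cs.length (iota t b * cs.simple j) < cs.length (iota t b) := by
          intro hdz
          rw [invStep_descent t hdz] at hw'
          exact hzw hw'
        have hup : cs.length (iota t b) < cs.length (iota t b * cs.simple j) := by
          have := cs.length_mul_simple_ne (iota t b) j
          omega
        obtain ⟨hlzw, hnezw, hdws, hvz⟩ := invStep_up_spec t hzti hup
        rw [hw'] at hlzw hnezw hdws hvz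
        have hhatz : hatLength t (iota t b) ≤ b.length := hat_le t b rfl
        rcases Nat.lt_or_gt_of_ne (cs.length_mul_simple_ne u j) with hud | huu
        · obtain ⟨hu'ti, hu'lt, hu'inv⟩ := vdown_spec t hu hud
          have htl2 : Bruhat cs (vdown t u j) (iota t b) := by
            rw [← hvz]
            exact tl2 t hu hw hb hud hdws
          by_cases hu'z : vdown t u j = iota t b
          · exfalso
            rw [hu'z, hw'] at hu'inv
            exact hne hu'inv.symm
          · have ih2 : hatLength t (vdown t u j) < hatLength t (iota t b) :=
              ihn (vdown t u j) (iota t b) (by omega) hu'ti hzti htl2 hu'z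
            obtain ⟨c, hc, hclen⟩ := hat_spec t hu'ti
            have hcu : iota t (c ++ [j]) = u := by rw [iota_concat, hc, hu'inv]
            have h6 : hatLength t u ≤ c.length + 1 := by
              have := hat_le t (c ++ [j]) hcu
              rwa [List.length_append, List.length_singleton] at this
            omega
        · have htl1 : Bruhat cs u (iota t b) := by
            rw [← hvz]
            exact tl1 t hu hw hb hdws huu
          by_cases huz : u = iota t b
          · rw [huz]
            omega
          · have ih2 := ihn u (iota t b) (by omega) hu hzti htl1 huz
            omega

lemma hat_mono {u w : W} (hu : IsTwistedInvolution t u) (hw : IsTwistedInvolution t w)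
    (hb : Bruhat cs u w) (hne : u ≠ w) : hatLength t u < hatLength t w :=
  hat_mono_aux t (cs.length w) u w le_rfl hu hw hb hne

/-- `vdown t w j` is strictly below `w` in Bruhat order. -/
lemma vdown_bruhat {w : W} (hw : IsTwistedInvolution t w) {j : B}
    (hd : cs.length (w * cs.simple j) < cs.length w) : Bruhat cs (vdown t w j) w := by
  unfold vdown
  by_cases h : t.auto (cs.simple j) * w * cs.simple j = w
  · rw [if_pos h]
    exact bruhat_step_down (cs.isReflection_simple j) hd
  · rw [if_neg h]
    have hlen2 := ti_down_dichotomy t hw hd h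
    have hws1 : cs.length (w * cs.simple j) + 1 = cs.length w :=
      (cs.length_mul_simple w j).resolve_left (by omega)
    have hstep1 : Bruhat cs (w * cs.simple j) w :=
      bruhat_step_down (cs.isReflection_simple j) hd
    have hd2 : cs.length (cs.simple (t.star j) * (w * cs.simple j)) <
        cs.length (w * cs.simple j) := by
      rw [← t.auto_simple, ← mul_assoc]
      omega
    have h5 := bruhat_step_down_left (cs.isReflection_simple (t.star j)) hd2
    rw [← t.auto_simple, ← mul_assoc] at h5
    exact bruhat_trans h5 hstep1

end Development

/-- Every twisted involution has an involution word; moreover if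
`ℓ(w * s i) < ℓ(w)` and `v` is `w * s i` (if `(s i)* * w * s i = w`) or `(s i)* * w * s i`
(otherwise), then `v ∈ I_*`, `ℓ̂(w) = ℓ̂(v) + 1`, and appending `i` to any involution word
for `v` gives an involution word for `w`. -/
theorem statement_2 {B W : Type*} [Group W] {M : CoxeterMatrix B} {cs : CoxeterSystem M W}
    (t : Twisting cs) :
    (∀ w : W, IsTwistedInvolution t w → ∃ a : List B, IsInvolutionWord t w a) ∧
    (∀ w : W, IsTwistedInvolution t w → ∀ i : B, cs.length (w * cs.simple i) < cs.length w →
      ∀ v : W,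
        v = (if t.auto (cs.simple i) * w * cs.simple i = w then w * cs.simple i
             else t.auto (cs.simple i) * w * cs.simple i) →
        IsTwistedInvolution t v ∧ hatLength t w = hatLength t v + 1 ∧
          ∀ a : List B, IsInvolutionWord t v a → IsInvolutionWord t w (a ++ [i])) := by
  constructor
  · intro w hw
    obtain ⟨a, ha, halen⟩ := hat_spec t hw
    refine ⟨a, ha, ?_⟩
    intro b hb
    have h2 := hat_le t b hb
    omega
  · intro w hw i hdi v hv
    have hd : cs.length (w * cs.simple i) < cs.length w := hdi
    have hveq : v = vdown t w i := hv
    subst hveq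
    obtain ⟨hvti, hvlt, hvinv⟩ := vdown_spec t hw hd
    have hup : hatLength t w ≤ hatLength t (vdown t w i) + 1 := by
      obtain ⟨c, hc, hclen⟩ := hat_spec t hvti
      have hcw : iota t (c ++ [i]) = w := by rw [iota_concat, hc, hvinv]
      have h2 := hat_le t (c ++ [i]) hcw
      rwa [List.length_append, List.length_singleton, hclen] at h2
    have hlo : hatLength t (vdown t w i) < hatLength t w := by
      refine hat_mono t hvti hw (vdown_bruhat t hw hd) ?_
      intro hc
      rw [hc] at hvlt
      omega
    have hhat : hatLength t w = hatLength t (vdown t w i) + 1 := by omega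
    refine ⟨hvti, hhat, ?_⟩
    rintro a ⟨ha, hamin⟩
    have hvhat : a.length = hatLength t (vdown t w i) := by
      refine le_antisymm ?_ (hat_le t a ha)
      obtain ⟨c, hc, hclen⟩ := hat_spec t hvti
      rw [← hclen]
      exact hamin c hc
    constructor
    · rw [iota_concat, ha, hvinv]
    · intro b hb
      have h2 := hat_le t b hb
      rw [List.length_append, List.length_singleton, hvhat]
      omega

end TwistedCoxeter
end
end
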